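/- Let G be a finite group and let U₁, U₂ be subgroups of G such that the induced characters Ind^G_{U₁} 1_{U₁} and Ind^G_{U₂} 1_{U₂} from the trivial characters are equal. Suppose there exists a normal subgroup N of G containing both U₁ and U₂ as subgroups of index 2. Then U₁ and U₂ are conjugate in G. -/
import Mathlib

open Finset

open scoped Classical in
private lemma mem_conjmap {G : Type*} [Group G] (U : Subgroup G) (h n : G) :
    n ∈ Subgroup.map (MulAut.conj h).toMonoidHom U ↔ h⁻¹ * n * h ∈ U := by
  constructor
  · rintro ⟨x, hx, rfl⟩
    simpa [MulAut.conj_apply, mul_assoc] using hx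
  · intro hn
    exact ⟨h⁻¹ * n * h, hn, by simp [MulAut.conj_apply]; group⟩

open scoped Classical in
private lemma count_lemma {G : Type*} [Group G] [Fintype G] (U : Subgroup G) (g : G) :
    (Finset.univ.filter fun h : G => h⁻¹ * g * h ∈ U).card
      = Nat.card {x : G ⧸ U // g • x = x} * Nat.card U := by
  have hcond : ∀ h : G, (h⁻¹ * g * h ∈ U) ↔ g • (QuotientGroup.mk h : G ⧸ U) = QuotientGroup.mk h := by
    intro h
    rw [MulAction.Quotient.smul_mk, QuotientGroup.eq]
    constructor
    · intro hh
      have := U.inv_mem hh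
      simpa [mul_assoc] using this
    · intro hh
      have := U.inv_mem hh
      simpa [mul_assoc] using this
  set t : Finset (G ⧸ U) := Finset.univ.filter fun x => g • x = x with ht
  have hmap : ∀ h ∈ (Finset.univ.filter fun h : G => h⁻¹ * g * h ∈ U),
      (QuotientGroup.mk h : G ⧸ U) ∈ t := by
    intro h hh
    simp only [ht, mem_filter, mem_univ, true_and] at hh ⊢
    exact (hcond h).1 hh
  rw [Finset.card_eq_sum_card_fiberwise hmap]
  have hfib : ∀ b ∈ t, ((Finset.univ.filter fun h : G => h⁻¹ * g * h ∈ U).filter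
      fun h => (QuotientGroup.mk h : G ⧸ U) = b).card = Nat.card U := by
    intro b hb
    simp only [ht, mem_filter, mem_univ, true_and] at hb
    have : ((Finset.univ.filter fun h : G => h⁻¹ * g * h ∈ U).filter
        fun h => (QuotientGroup.mk h : G ⧸ U) = b)
        = Finset.univ.filter fun h : G => (QuotientGroup.mk h : G ⧸ U) = b := by
      ext h
      simp only [mem_filter, mem_univ, true_and, and_iff_right_iff_imp]
      intro hh
      rw [hcond h, hh, hb]
    rw [this]
    have h1 : (Finset.univ.filter fun h : G => (QuotientGroup.mk h : G ⧸ U) = b).card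
        = Nat.card {h : G // (QuotientGroup.mk h : G ⧸ U) = b} := by
      rw [Nat.card_eq_fintype_card, Fintype.card_subtype]
    rw [h1]
    have e1 : {h : G // (QuotientGroup.mk h : G ⧸ U) = b}
        ≃ (QuotientGroup.mk ⁻¹' ({b} : Set (G ⧸ U))) :=
      Equiv.subtypeEquivRight (by intro x; simp)
    rw [Nat.card_congr e1,
      Nat.card_congr (QuotientGroup.preimageMkEquivSubgroupProdSet U ({b} : Set (G ⧸ U))),
      Nat.card_prod]
    simp
  rw [Finset.sum_congr rfl hfib, Finset.sum_const, smul_eq_mul]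
  congr 1
  rw [Nat.card_eq_fintype_card, Fintype.card_subtype]

open scoped Classical in
private lemma orth {G : Type*} [Group G] [Fintype G] (N A B : Subgroup G)
    (hAN : A ≤ N) (hBN : B ≤ N) (hcard : Nat.card A = Nat.card B)
    (hmul : ∀ n m : G, n ∈ N → m ∈ N → n ∉ B → m ∉ B → n * m ∈ B) :
    ∑ n : G, (if n ∈ A then (if n ∈ B then (1 : ℤ) else -1) else 0)
      = if A = B then (Nat.card A : ℤ) else 0 := by
  by_cases hAB : A = B
  · subst hAB
    rw [if_pos rfl]
    have h1 : ∀ n : G, (if n ∈ A then (if n ∈ A then (1 : ℤ) else -1) else 0)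
        = if n ∈ A then 1 else 0 := by
      intro n; by_cases hn : n ∈ A <;> simp [hn]
    rw [Finset.sum_congr rfl fun n _ => h1 n, Finset.sum_boole]
    congr 1
    rw [Nat.card_eq_fintype_card, Fintype.card_subtype]
  · rw [if_neg hAB]
    -- find an element of A not in B
    have hex : ∃ a, a ∈ A ∧ a ∉ B := by
      by_contra hcon
      push_neg at hcon
      apply hAB
      have hsub : (A : Set G) ⊆ (B : Set G) := fun x hx => hcon x hx
      have : (A : Set G) = (B : Set G) := by
        apply Set.eq_of_subset_of_ncard_le hsub
        rw [← Nat.card_coe_set_eq, ← Nat.card_coe_set_eq]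
        simp only [SetLike.coe_sort_coe]
        omega
      exact SetLike.coe_injective this
    obtain ⟨a, haA, haB⟩ := hex
    have key : (Finset.univ.filter fun n : G => n ∈ A ∧ n ∈ B).card
        = (Finset.univ.filter fun n : G => n ∈ A ∧ n ∉ B).card := by
      apply Finset.card_bij' (fun x _ => a * x) (fun y _ => a⁻¹ * y)
      · intro x hx
        simp only [mem_filter, mem_univ, true_and] at hx ⊢
        refine ⟨A.mul_mem haA hx.1, fun hc => haB ?_⟩
        have := B.mul_mem hc (B.inv_mem hx.2)
        simpa [mul_assoc] using this
      · intro y hy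
        simp only [mem_filter, mem_univ, true_and] at hy ⊢
        refine ⟨A.mul_mem (A.inv_mem haA) hy.1, ?_⟩
        exact hmul a⁻¹ y (N.inv_mem (hAN haA)) (hAN hy.1)
          (fun hc => haB (by simpa using B.inv_mem hc)) hy.2
      · intro x _; simp [mul_assoc]
      · intro y _; simp [← mul_assoc]
    have hpt : ∀ n : G, (if n ∈ A then (if n ∈ B then (1 : ℤ) else -1) else 0)
        = (if n ∈ A ∧ n ∈ B then (1 : ℤ) else 0) - (if n ∈ A ∧ n ∉ B then (1 : ℤ) else 0) := by
      intro n
      by_cases h1 : n ∈ A <;> by_cases h2 : n ∈ B <;> simp [h1, h2]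
    rw [Finset.sum_congr rfl fun n _ => hpt n, Finset.sum_sub_distrib,
      Finset.sum_boole, Finset.sum_boole, key]
    ring

theorem stmt2 (G : Type*) [Group G] [Fintype G] (U₁ U₂ N : Subgroup G) [N.Normal]
    (h₁ : U₁ ≤ N) (h₂ : U₂ ≤ N)
    (hi₁ : (U₁.subgroupOf N).index = 2) (hi₂ : (U₂.subgroupOf N).index = 2)
    (hchar : ∀ g : G,
      Nat.card {x : G ⧸ U₁ // g • x = x} = Nat.card {x : G ⧸ U₂ // g • x = x}) :
    ∃ g : G, Subgroup.map (MulAut.conj g).toMonoidHom U₁ = U₂ := by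
  classical
  -- cardinalities
  have hc₁ : Nat.card U₁ * 2 = Nat.card N := by
    have e := Subgroup.card_mul_index (U₁.subgroupOf N)
    rw [hi₁, Nat.card_congr (Subgroup.subgroupOfEquivOfLe h₁).toEquiv] at e
    exact e
  have hc₂ : Nat.card U₂ * 2 = Nat.card N := by
    have e := Subgroup.card_mul_index (U₂.subgroupOf N)
    rw [hi₂, Nat.card_congr (Subgroup.subgroupOfEquivOfLe h₂).toEquiv] at e
    exact e
  have cardU : Nat.card U₁ = Nat.card U₂ := by omega
  -- multiplication rule for U₂ inside N
  have hmulB : ∀ n m : G, n ∈ N → m ∈ N → n ∉ U₂ → m ∉ U₂ → n * m ∈ U₂ := by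
    intro n m hnN hmN hnB hmB
    have hn' : (⟨n, hnN⟩ : N) ∉ U₂.subgroupOf N := by
      simpa [Subgroup.mem_subgroupOf] using hnB
    have hm' : (⟨m, hmN⟩ : N) ∉ U₂.subgroupOf N := by
      simpa [Subgroup.mem_subgroupOf] using hmB
    have := (Subgroup.mul_mem_iff_of_index_two hi₂).2 (iff_of_false hn' hm')
    simpa [Subgroup.mem_subgroupOf] using this
  -- equal counts of conjugators
  have hcount : ∀ g : G, (Finset.univ.filter fun h : G => h⁻¹ * g * h ∈ U₁).card
      = (Finset.univ.filter fun h : G => h⁻¹ * g * h ∈ U₂).card := by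
    intro g
    rw [count_lemma, count_lemma, hchar g, cardU]
  -- properties of conjugates
  have hconjle : ∀ (U : Subgroup G), U ≤ N → ∀ h : G,
      Subgroup.map (MulAut.conj h).toMonoidHom U ≤ N := by
    intro U hUN h x hx
    obtain ⟨y, hy, rfl⟩ := hx
    simpa [MulAut.conj_apply] using Subgroup.Normal.conj_mem ‹N.Normal› y (hUN hy) h
  have hconjcard : ∀ (U : Subgroup G) (h : G),
      Nat.card (Subgroup.map (MulAut.conj h).toMonoidHom U) = Nat.card U := by
    intro U h
    exact (Nat.card_congr (Subgroup.equivMapOfInjective U _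
      (MulAut.conj h).injective).toEquiv).symm
  -- the key identity
  have key : ∀ (U : Subgroup G), U ≤ N → Nat.card U = Nat.card U₂ →
      ∑ n : G, (if n ∈ N then (if n ∈ U₂ then (1 : ℤ) else -1) else 0) *
        ((Finset.univ.filter fun h : G => h⁻¹ * n * h ∈ U).card : ℤ)
      = ∑ h : G, (if Subgroup.map (MulAut.conj h).toMonoidHom U = U₂
          then (Nat.card U₂ : ℤ) else 0) := by
    intro U hUN hUcard
    have step1 : ∑ n : G, (if n ∈ N then (if n ∈ U₂ then (1 : ℤ) else -1) else 0) *
        ((Finset.univ.filter fun h : G => h⁻¹ * n * h ∈ U).card : ℤ)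
        = ∑ n : G, ∑ h : G, (if n ∈ N then (if n ∈ U₂ then (1 : ℤ) else -1) else 0) *
            (if h⁻¹ * n * h ∈ U then (1 : ℤ) else 0) := by
      refine Finset.sum_congr rfl fun n _ => ?_
      rw [← Finset.mul_sum]
      congr 1
      rw [Finset.sum_boole]
    rw [step1, Finset.sum_comm]
    refine Finset.sum_congr rfl fun h _ => ?_
    set Ah := Subgroup.map (MulAut.conj h).toMonoidHom U with hAh
    have hptw : ∀ n : G, (if n ∈ N then (if n ∈ U₂ then (1 : ℤ) else -1) else 0) *
        (if h⁻¹ * n * h ∈ U then (1 : ℤ) else 0)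
        = (if n ∈ Ah then (if n ∈ U₂ then (1 : ℤ) else -1) else 0) := by
      intro n
      by_cases hn : h⁻¹ * n * h ∈ U
      · have hnA : n ∈ Ah := (mem_conjmap U h n).2 hn
        have hnN : n ∈ N := hconjle U hUN h hnA
        simp [hn, hnA, hnN]
      · have hnA : n ∉ Ah := fun hc => hn ((mem_conjmap U h n).1 hc)
        simp [hn, hnA]
    rw [Finset.sum_congr rfl fun n _ => hptw n,
      orth N Ah U₂ (hconjle U hUN h) h₂ ((hconjcard U h).trans hUcard) hmulB]
    by_cases hA2 : Ah = U₂
    · rw [if_pos hA2, if_pos hA2, hA2]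
    · rw [if_neg hA2, if_neg hA2]
  -- combine
  have hmain : ∑ h : G, (if Subgroup.map (MulAut.conj h).toMonoidHom U₁ = U₂
        then (Nat.card U₂ : ℤ) else 0)
      = ∑ h : G, (if Subgroup.map (MulAut.conj h).toMonoidHom U₂ = U₂
        then (Nat.card U₂ : ℤ) else 0) := by
    rw [← key U₁ h₁ cardU, ← key U₂ h₂ rfl]
    refine Finset.sum_congr rfl fun n _ => ?_
    rw [hcount n]
  by_contra hcon
  push_neg at hcon
  have hzero : ∑ h : G, (if Subgroup.map (MulAut.conj h).toMonoidHom U₁ = U₂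
      then (Nat.card U₂ : ℤ) else 0) = 0 :=
    Finset.sum_eq_zero fun h _ => if_neg (hcon h)
  have hone : Subgroup.map (MulAut.conj (1 : G)).toMonoidHom U₂ = U₂ := by
    ext x
    rw [mem_conjmap]
    simp
  have hpos : 0 < ∑ h : G, (if Subgroup.map (MulAut.conj h).toMonoidHom U₂ = U₂
      then (Nat.card U₂ : ℤ) else 0) := by
    refine Finset.sum_pos' (fun h _ => ?_) ⟨(1 : G), Finset.mem_univ _, ?_⟩
    · split
      · exact_mod_cast Nat.zero_le _
      · exact le_refl 0
    · rw [if_pos hone]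
      exact_mod_cast Nat.card_pos
  rw [← hmain, hzero] at hpos
  exact lt_irrefl 0 hpos
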